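/- Let (K, v) be a valued field with value group Γ, let n > 1, and let γ = v(ε) ∈ Γ be a positive element not divisible by n. Set F(x,y) = x^{4n} + ε(xy - ε^2)^n + ε^2 y^{4n}. Then for all nonzero a, b ∈ K the three values v(a^{4n}), v(ε(ab - ε^2)^n), v(ε^2 b^{4n}) are pairwise distinct, and hence v(F(a,b)) = min of these three values. -/

import Mathlib

/-- Let `(K,v)` be a valued field with value group `Γ`, `n > 1`, and `γ = v ε` a positive
element of `Γ` not divisible by `n`.  For `F(x,y) = x^{4n} + ε(xy - ε²)ⁿ + ε²y^{4n}` and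
nonzero `a b : K`, the three values `v(a^{4n})`, `v(ε(ab - ε²)ⁿ)`, `v(ε²b^{4n})` are
pairwise distinct, and `v (F a b)` equals their minimum. -/
theorem three_distinct_values {K Γ : Type*} [Field K] [AddCommGroup Γ] [LinearOrder Γ] [IsOrderedAddMonoid Γ]
    (v : AddValuation K (WithTop Γ)) (n : ℕ) (hn : 1 < n)
    (ε : K) (γ : Γ) (hε : v ε = (γ : WithTop Γ)) (hγ : 0 < γ)
    (hnd : ¬∃ δ : Γ, n • δ = γ)
    (a b : K) (ha : a ≠ 0) (hb : b ≠ 0) :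
    (v (a ^ (4 * n)) ≠ v (ε * (a * b - ε ^ 2) ^ n) ∧
     v (a ^ (4 * n)) ≠ v (ε ^ 2 * b ^ (4 * n)) ∧
     v (ε * (a * b - ε ^ 2) ^ n) ≠ v (ε ^ 2 * b ^ (4 * n))) ∧
    v (a ^ (4 * n) + ε * (a * b - ε ^ 2) ^ n + ε ^ 2 * b ^ (4 * n)) =
      min (v (a ^ (4 * n)))
        (min (v (ε * (a * b - ε ^ 2) ^ n)) (v (ε ^ 2 * b ^ (4 * n)))) := by
  have hn0 : n ≠ 0 := by omega
  obtain ⟨α, hα⟩ : ∃ α : Γ, v a = (α : WithTop Γ) := by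
    rcases WithTop.ne_top_iff_exists.mp ((v.ne_top_iff).mpr ha) with ⟨α, h⟩
    exact ⟨α, h.symm⟩
  obtain ⟨β, hβ⟩ : ∃ β : Γ, v b = (β : WithTop Γ) := by
    rcases WithTop.ne_top_iff_exists.mp ((v.ne_top_iff).mpr hb) with ⟨β, h⟩
    exact ⟨β, h.symm⟩
  have hA : v (a ^ (4 * n)) = (((4 * n) • α : Γ) : WithTop Γ) := by
    rw [v.map_pow, hα, WithTop.coe_nsmul]
  have hC : v (ε ^ 2 * b ^ (4 * n)) = ((2 • γ + (4 * n) • β : Γ) : WithTop Γ) := by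
    rw [v.map_mul, v.map_pow, v.map_pow, hε, hβ]; norm_cast
  -- first ≠ third
  have h13 : v (a ^ (4 * n)) ≠ v (ε ^ 2 * b ^ (4 * n)) := by
    rw [hA, hC]
    intro h
    have h' : (4 * n) • α = 2 • γ + (4 * n) • β := WithTop.coe_injective h
    have hd : (4 * n) • (α - β) = 2 • γ := by rw [smul_sub, h']; abel
    apply hnd
    refine ⟨2 • (α - β), ?_⟩
    have h2 : Function.Injective (fun x : Γ => 2 • x) :=
      (nsmul_right_strictMono (n := 2) (by norm_num)).injective
    apply h2
    show 2 • (n • 2 • (α - β)) = 2 • γ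
    rw [← mul_smul, ← mul_smul, ← hd]
    congr 1
    ring
  have h12 : v (a ^ (4 * n)) ≠ v (ε * (a * b - ε ^ 2) ^ n) ∧
      v (ε * (a * b - ε ^ 2) ^ n) ≠ v (ε ^ 2 * b ^ (4 * n)) := by
    by_cases hz : a * b - ε ^ 2 = 0
    · have hmid : v (ε * (a * b - ε ^ 2) ^ n) = (⊤ : WithTop Γ) := by
        rw [hz, zero_pow hn0, mul_zero, v.map_zero]
      constructor
      · rw [hA, hmid]; exact WithTop.coe_ne_top
      · rw [hC, hmid]; exact (WithTop.coe_ne_top).symm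
    · obtain ⟨m, hm⟩ : ∃ m : Γ, v (a * b - ε ^ 2) = (m : WithTop Γ) := by
        rcases WithTop.ne_top_iff_exists.mp ((v.ne_top_iff).mpr hz) with ⟨m, h⟩
        exact ⟨m, h.symm⟩
      have hmid : v (ε * (a * b - ε ^ 2) ^ n) = ((γ + n • m : Γ) : WithTop Γ) := by
        rw [v.map_mul, v.map_pow, hε, hm]; norm_cast
      constructor
      · rw [hA, hmid]
        intro h
        have h' : (4 * n) • α = γ + n • m := WithTop.coe_injective h
        apply hnd
        refine ⟨4 • α - m, ?_⟩
        rw [smul_sub, ← mul_smul]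
        have : n * 4 = 4 * n := by ring
        rw [this, h']
        abel
      · rw [hC, hmid]
        intro h
        have h' : γ + n • m = 2 • γ + (4 * n) • β := WithTop.coe_injective h
        apply hnd
        refine ⟨m - 4 • β, ?_⟩
        rw [smul_sub, ← mul_smul]
        have h'' : n • m = γ + (4 * n) • β := by
          rw [two_nsmul, add_assoc] at h'
          exact add_left_cancel h'
        rw [show n * 4 = 4 * n from by ring, h'']
        abel
  refine ⟨⟨h12.1, h13, h12.2⟩, ?_⟩
  have key : v (a ^ (4 * n) + ε * (a * b - ε ^ 2) ^ n) =
      min (v (a ^ (4 * n))) (v (ε * (a * b - ε ^ 2) ^ n)) :=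
    v.map_add_of_distinct_val h12.1
  have hne : v (a ^ (4 * n) + ε * (a * b - ε ^ 2) ^ n) ≠ v (ε ^ 2 * b ^ (4 * n)) := by
    rw [key]
    rcases min_cases (v (a ^ (4 * n))) (v (ε * (a * b - ε ^ 2) ^ n)) with ⟨h, _⟩ | ⟨h, _⟩ <;>
      rw [h]
    · exact h13
    · exact h12.2
  rw [v.map_add_of_distinct_val hne, key, min_assoc]
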